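/- arXiv:2012.03582 — 2 statements merged into one kernel-verified Lean document; each statement's English description precedes it below -/
import Mathlib

section
/- If B_{b,t} and B_{b,t'} are two blossoms with the same base b and tenacities t <= t' < tenacity(b) with t' < l_m, then B_{b,t} is a subset of B_{b,t'}. -/
open scoped Classical

universe u

variable {V : Type u}

/-- A finite-or-infinite undirected graph together with a matching. -/
structure MatchedGraph (V : Type u) where
  adj : V → V → Prop
  symm : ∀ u v, adj u v → adj v u
  loopless : ∀ v, ¬ adj v v
  M : V → V → Prop
  M_symm : ∀ u v, M u v → M v u
  M_sub : ∀ u v, M u v → adj u v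
  M_matching : ∀ u v w, M u v → M u w → v = w

namespace MatchedGraph

/-- A vertex is unmatched if no matched edge is incident to it. -/
def unmatched (g : MatchedGraph V) (v : V) : Prop := ∀ u, ¬ g.M v u

/-- `p` is a simple alternating path starting at `b` and ending at `v`,
whose first edge is unmatched and whose edges alternate unmatched/matched.
(The `i`-th edge is matched iff `i` is odd.) -/
def AltPath (g : MatchedGraph V) (p : List V) (b v : V) : Prop :=
  p.head? = some b ∧ p.getLast? = some v ∧ p.Nodup ∧
  ∀ i, i + 1 < p.length →
    g.adj (p.getD i b) (p.getD (i + 1) b) ∧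
      (g.M (p.getD i b) (p.getD (i + 1) b) ↔ i % 2 = 1)

/-- An alternating path from an *unmatched* vertex `f` to `v`. -/
def AltPathFrom (g : MatchedGraph V) (p : List V) (f v : V) : Prop :=
  g.unmatched f ∧ g.AltPath p f v

/-- Minimum length of an even alternating path from an unmatched vertex to `v`. -/
noncomputable def evenlevel (g : MatchedGraph V) (v : V) : ℕ∞ :=
  sInf {n : ℕ∞ | ∃ p f, g.AltPathFrom p f v ∧ Even (p.length - 1) ∧
    n = ((p.length - 1 : ℕ) : ℕ∞)}

/-- Minimum length of an odd alternating path from an unmatched vertex to `v`. -/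
noncomputable def oddlevel (g : MatchedGraph V) (v : V) : ℕ∞ :=
  sInf {n : ℕ∞ | ∃ p f, g.AltPathFrom p f v ∧ Odd (p.length - 1) ∧
    n = ((p.length - 1 : ℕ) : ℕ∞)}

noncomputable def tenacity (g : MatchedGraph V) (v : V) : ℕ∞ :=
  g.evenlevel v + g.oddlevel v

noncomputable def minlevel (g : MatchedGraph V) (v : V) : ℕ∞ :=
  min (g.evenlevel v) (g.oddlevel v)

noncomputable def maxlevel (g : MatchedGraph V) (v : V) : ℕ∞ :=
  max (g.evenlevel v) (g.oddlevel v)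

/-- Minimum length of an augmenting path: an alternating path between two
distinct unmatched vertices. -/
noncomputable def lm (g : MatchedGraph V) : ℕ∞ :=
  sInf {n : ℕ∞ | ∃ p f v, g.AltPathFrom p f v ∧ g.unmatched v ∧ f ≠ v ∧
    n = ((p.length - 1 : ℕ) : ℕ∞)}

/-- Minimum tenacity of any vertex. -/
noncomputable def tm (g : MatchedGraph V) : ℕ∞ := ⨅ v, g.tenacity v

/-- `p` is an `evenlevel(v)` path starting at the unmatched vertex `f`. -/
def IsEvenlevelPath (g : MatchedGraph V) (p : List V) (f v : V) : Prop :=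
  g.AltPathFrom p f v ∧ Even (p.length - 1) ∧
    ((p.length - 1 : ℕ) : ℕ∞) = g.evenlevel v

/-- `p` is an `oddlevel(v)` path starting at the unmatched vertex `f`. -/
def IsOddlevelPath (g : MatchedGraph V) (p : List V) (f v : V) : Prop :=
  g.AltPathFrom p f v ∧ Odd (p.length - 1) ∧
    ((p.length - 1 : ℕ) : ℕ∞) = g.oddlevel v

/-- `p` is a `minlevel(v)` path starting at the unmatched vertex `f`. -/
def IsMinlevelPath (g : MatchedGraph V) (p : List V) (f v : V) : Prop :=
  g.AltPathFrom p f v ∧ ((p.length - 1 : ℕ) : ℕ∞) = g.minlevel v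

/-- `p` is a `maxlevel(v)` path starting at the unmatched vertex `f`. -/
def IsMaxlevelPath (g : MatchedGraph V) (p : List V) (f v : V) : Prop :=
  g.AltPathFrom p f v ∧ ((p.length - 1 : ℕ) : ℕ∞) = g.maxlevel v

/-- The vertex at position `i` of `p` (whose prefix from `f` has length `i`)
is BFS-honest w.r.t. `p`. -/
def BFSHonest (g : MatchedGraph V) (p : List V) (f : V) (i : ℕ) : Prop :=
  (Even i → g.evenlevel (p.getD i f) = (i : ℕ∞)) ∧
  (Odd i → g.oddlevel (p.getD i f) = (i : ℕ∞))

/-- `u` is a predecessor of `v`: `(u, v)` is the last edge of some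
`minlevel(v)` path. -/
def IsPred (g : MatchedGraph V) (u v : V) : Prop :=
  ∃ p f, g.IsMinlevelPath p f v ∧ 2 ≤ p.length ∧ p.getD (p.length - 2) f = u

/-- A prop is an edge which is the last edge of a minlevel path to one of its
endpoints. -/
def IsPropEdge (g : MatchedGraph V) (u v : V) : Prop :=
  g.IsPred u v ∨ g.IsPred v u

/-- A bridge is an edge that is not a prop. -/
def IsBridge (g : MatchedGraph V) (u v : V) : Prop :=
  g.adj u v ∧ ¬ g.IsPropEdge u v

/-- Tenacity of an edge. -/
noncomputable def etenacity (g : MatchedGraph V) (u v : V) : ℕ∞ :=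
  if g.M u v then g.oddlevel u + g.oddlevel v + 1
  else g.evenlevel u + g.evenlevel v + 1

/-- The set `B(v)` of all `F(p, v)`: for each `evenlevel(v)` or `oddlevel(v)`
path `p`, the vertex on `p` farthest from the unmatched endpoint among the
vertices of tenacity greater than `tenacity(v)`. -/
def Bset (g : MatchedGraph V) (v : V) : Set V :=
  {b | ∃ p f i, (g.IsEvenlevelPath p f v ∨ g.IsOddlevelPath p f v) ∧
    i < p.length ∧ b = p.getD i f ∧ g.tenacity v < g.tenacity b ∧
    ∀ k, i < k → k < p.length → g.tenacity (p.getD k f) ≤ g.tenacity v}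

/-- `b` is the (unique) base of `v`. -/
def baseOf (g : MatchedGraph V) (v b : V) : Prop := g.Bset v = {b}

/-- Iterated bases: `iterBase k v b` means `b = base^k(v)` (with `base^0(v) = v`). -/
def iterBase (g : MatchedGraph V) : ℕ → V → V → Prop
  | 0, v, b => v = b
  | k + 1, v, b => ∃ u, g.iterBase k v u ∧ g.baseOf u b

/-- A vertex is outer if `evenlevel(v) < oddlevel(v)`. -/
def IsOuter (g : MatchedGraph V) (v : V) : Prop := g.evenlevel v < g.oddlevel v

/-- A vertex is inner if it is not outer. -/
def IsInner (g : MatchedGraph V) (v : V) : Prop := g.oddlevel v ≤ g.evenlevel v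

/-- The set `S_{b,t}` of vertices of tenacity `t` with base `b`. -/
def Sset (g : MatchedGraph V) (t : ℕ) (b : V) : Set V :=
  {v | g.tenacity v = (t : ℕ∞) ∧ g.baseOf v b}

/-- The blossom `B_{b,t}`, defined recursively. -/
def blossom (g : MatchedGraph V) : ℕ → V → Set V
  | 0, _ => ∅
  | 1, _ => ∅
  | t + 2, b => g.Sset (t + 2) b ∪
      ⋃ v ∈ {v | (v ∈ g.Sset (t + 2) b ∨ v = b) ∧ g.IsOuter v}, blossom g t v

/-- The nesting depth `N(B_{b,t})` of a blossom. -/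
noncomputable def ndepth (g : MatchedGraph V) [Fintype V] : ℕ → V → ℕ
  | 0, _ => 0
  | 1, _ => 0
  | t + 2, b =>
    if (g.Sset (t + 2) b).Nonempty then
      1 + Finset.univ.sup (fun v =>
        if (v ∈ g.Sset (t + 2) b ∨ v = b) ∧ g.IsOuter v then ndepth g t v else 0)
    else ndepth g t b

/-- `evenlevel(b; v)`: minimum even length of an alternating path from `b` to
`v` starting with an unmatched edge. -/
noncomputable def evenlevelFrom (g : MatchedGraph V) (b v : V) : ℕ∞ :=
  sInf {n : ℕ∞ | ∃ p, g.AltPath p b v ∧ Even (p.length - 1) ∧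
    n = ((p.length - 1 : ℕ) : ℕ∞)}

/-- `oddlevel(b; v)`: minimum odd length of an alternating path from `b` to
`v` starting with an unmatched edge. -/
noncomputable def oddlevelFrom (g : MatchedGraph V) (b v : V) : ℕ∞ :=
  sInf {n : ℕ∞ | ∃ p, g.AltPath p b v ∧ Odd (p.length - 1) ∧
    n = ((p.length - 1 : ℕ) : ℕ∞)}

end MatchedGraph

/-! ### Auxiliary lemmas -/

section AuxLists

variable {V : Type u}

private lemma length_pos_of_head?_aux {p : List V} {f : V} (h : p.head? = some f) :
    0 < p.length := by
  cases p with
  | nil => simp at h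
  | cons a l => simp

private lemma head_getD_aux {p : List V} {f : V} (h : p.head? = some f) (d : V)
    (hl : 0 < p.length) : p.getD 0 d = f := by
  rw [List.head?_eq_getElem?, List.getElem?_eq_getElem hl] at h
  rw [List.getD_eq_getElem p d hl]
  exact Option.some.inj h

private lemma last_getD_aux {p : List V} {v : V} (h : p.getLast? = some v) (d : V)
    (hl : 0 < p.length) : p.getD (p.length - 1) d = v := by
  have h1 : p.length - 1 < p.length := by omega
  rw [List.getLast?_eq_getElem?, List.getElem?_eq_getElem h1] at h
  rw [List.getD_eq_getElem p d h1]
  exact Option.some.inj h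

private lemma head_ne_last_aux {p : List V} {a b : V} (hnd : p.Nodup) (hlen : 2 ≤ p.length)
    (ha : p.head? = some a) (hb : p.getLast? = some b) : a ≠ b := by
  have h0 : 0 < p.length := by omega
  have h1 : p.length - 1 < p.length := by omega
  rw [List.head?_eq_getElem?, List.getElem?_eq_getElem h0] at ha
  rw [List.getLast?_eq_getElem?, List.getElem?_eq_getElem h1] at hb
  intro hab
  have heq : p[0] = p[p.length - 1] := by
    rw [Option.some.inj ha, Option.some.inj hb, hab]
  have := (hnd.getElem_inj_iff).mp heq
  omega

private lemma mem_of_sInf_eq_coe_aux {S : Set ℕ∞} (hS : ∀ n ∈ S, ∃ m : ℕ, n = (m : ℕ∞)) {e : ℕ}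
    (h : sInf S = (e : ℕ∞)) : (e : ℕ∞) ∈ S := by
  have hne : S.Nonempty := by
    by_contra hc
    rw [Set.not_nonempty_iff_eq_empty] at hc
    rw [hc, sInf_empty] at h
    exact (ENat.coe_ne_top e) h.symm
  obtain ⟨n, hn⟩ := hne
  obtain ⟨m, rfl⟩ := hS n hn
  have hT0 : sInf {m : ℕ | (m : ℕ∞) ∈ S} ∈ {m : ℕ | (m : ℕ∞) ∈ S} := Nat.sInf_mem ⟨m, hn⟩
  have hT : ((sInf {m : ℕ | (m : ℕ∞) ∈ S} : ℕ) : ℕ∞) ∈ S := hT0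
  have h1 : sInf S = ((sInf {m : ℕ | (m : ℕ∞) ∈ S} : ℕ) : ℕ∞) := by
    refine le_antisymm (sInf_le hT) (le_sInf ?_)
    intro c hc
    obtain ⟨k, rfl⟩ := hS c hc
    exact_mod_cast Nat.sInf_le hc
  rw [h1] at h
  rw [← h]
  exact hT

end AuxLists

namespace MatchedGraph

variable {V : Type u}

lemma altPath_take (g : MatchedGraph V) {p : List V} {f v : V} (h : g.AltPath p f v)
    {i : ℕ} (hi : i < p.length) :
    g.AltPath (p.take (i + 1)) f (p.getD i f) := by
  obtain ⟨hhead, hlast, hnd, hedge⟩ := h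
  have hlen : (p.take (i + 1)).length = i + 1 := by
    rw [List.length_take]; omega
  refine ⟨?_, ?_, List.Nodup.sublist (List.take_sublist _ _) hnd, ?_⟩
  · rw [List.head?_eq_getElem?, List.getElem?_take, if_pos (Nat.succ_pos i),
      ← List.head?_eq_getElem?]
    exact hhead
  · rw [List.getLast?_eq_getElem?, hlen]
    simp only [Nat.add_sub_cancel]
    rw [List.getElem?_take, if_pos (Nat.lt_succ_self i), List.getElem?_eq_getElem hi,
        List.getD_eq_getElem p f hi]
  · intro k hk
    rw [hlen] at hk
    have hk1 : k + 1 < p.length := by omega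
    have e1 : (p.take (i + 1)).getD k f = p.getD k f := by
      have hk' : k < (p.take (i + 1)).length := by omega
      rw [List.getD_eq_getElem _ f hk', List.getD_eq_getElem p f (by omega), List.getElem_take]
    have e2 : (p.take (i + 1)).getD (k + 1) f = p.getD (k + 1) f := by
      have hk' : k + 1 < (p.take (i + 1)).length := by omega
      rw [List.getD_eq_getElem _ f hk', List.getD_eq_getElem p f hk1, List.getElem_take]
    rw [e1, e2]
    exact hedge k hk1

lemma level_le_of_pos (g : MatchedGraph V) {p : List V} {f v : V} (h : g.AltPathFrom p f v)
    {i : ℕ} (hi : i < p.length) :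
    (Even i → g.evenlevel (p.getD i f) ≤ (i : ℕ∞)) ∧
      (Odd i → g.oddlevel (p.getD i f) ≤ (i : ℕ∞)) := by
  obtain ⟨hf, hp⟩ := h
  have ht := g.altPath_take hp hi
  have hlen : (p.take (i + 1)).length - 1 = i := by rw [List.length_take]; omega
  constructor
  · intro hev
    apply sInf_le
    exact ⟨p.take (i + 1), f, ⟨hf, ht⟩, by rw [hlen]; exact hev, by rw [hlen]⟩
  · intro hod
    apply sInf_le
    exact ⟨p.take (i + 1), f, ⟨hf, ht⟩, by rw [hlen]; exact hod, by rw [hlen]⟩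

lemma altPath_concat (g : MatchedGraph V) {p : List V} {f x b : V} (h : g.AltPath p f x)
    (hb : b ∉ p) (hadj : g.adj x b)
    (hm : g.M x b ↔ (p.length - 1) % 2 = 1) :
    g.AltPath (p ++ [b]) f b := by
  obtain ⟨hhead, hlast, hnd, hedge⟩ := h
  have hl0 : 0 < p.length := length_pos_of_head?_aux hhead
  have hlast' : p.getD (p.length - 1) f = x := last_getD_aux hlast f hl0
  refine ⟨?_, List.getLast?_concat, ?_, ?_⟩
  · rw [List.head?_append, hhead]; rfl
  · exact List.Nodup.append hnd (List.nodup_singleton b) (by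
      intro a ha hb'
      simp only [List.mem_singleton] at hb'
      subst hb'
      exact hb ha)
  · intro i hi
    rw [List.length_append, List.length_singleton] at hi
    have key : ∀ j, j < p.length → (p ++ [b]).getD j f = p.getD j f := by
      intro j hj
      have hj' : j < (p ++ [b]).length := by rw [List.length_append]; omega
      rw [List.getD_eq_getElem _ f hj', List.getD_eq_getElem p f hj]
      exact List.getElem_append_left hj
    by_cases hcase : i + 1 < p.length
    · rw [key i (by omega), key (i + 1) hcase]
      exact hedge i hcase
    · have hieq : i = p.length - 1 := by omega
      have h2 : (p ++ [b]).getD (i + 1) f = b := by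
        have hi' : i + 1 < (p ++ [b]).length := by
          rw [List.length_append, List.length_singleton]; omega
        rw [List.getD_eq_getElem _ f hi']
        exact List.getElem_concat_length (l := p) (a := b) (i := i + 1) (by omega) _
      rw [key i (by omega), h2, hieq, hlast']
      exact ⟨hadj, hm⟩

lemma evenlevel_attained (g : MatchedGraph V) {v : V} {e : ℕ} (h : g.evenlevel v = (e : ℕ∞)) :
    ∃ p f, g.AltPathFrom p f v ∧ p.length - 1 = e ∧ Even e := by
  unfold evenlevel at h
  have hmem := mem_of_sInf_eq_coe_aux (fun n hn => by
    obtain ⟨p, f, -, -, rfl⟩ := hn; exact ⟨_, rfl⟩) h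
  obtain ⟨p, f, hpf, hev, heq⟩ := hmem
  have hlen : p.length - 1 = e := by exact_mod_cast heq.symm
  exact ⟨p, f, hpf, hlen, hlen ▸ hev⟩

lemma oddlevel_attained (g : MatchedGraph V) {v : V} {o : ℕ} (h : g.oddlevel v = (o : ℕ∞)) :
    ∃ p f, g.AltPathFrom p f v ∧ p.length - 1 = o ∧ Odd o := by
  unfold oddlevel at h
  have hmem := mem_of_sInf_eq_coe_aux (fun n hn => by
    obtain ⟨p, f, -, -, rfl⟩ := hn; exact ⟨_, rfl⟩) h
  obtain ⟨p, f, hpf, hod, heq⟩ := hmem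
  have hlen : p.length - 1 = o := by exact_mod_cast heq.symm
  exact ⟨p, f, hpf, hlen, hlen ▸ hod⟩

lemma tenacity_decomp (g : MatchedGraph V) {v : V} {s : ℕ} (h : g.tenacity v = (s : ℕ∞)) :
    ∃ e o : ℕ, g.evenlevel v = (e : ℕ∞) ∧ g.oddlevel v = (o : ℕ∞) ∧ e + o = s := by
  unfold tenacity at h
  have h1 : g.evenlevel v ≠ ⊤ := by
    intro h'; rw [h', top_add] at h; exact ENat.coe_ne_top s h.symm
  have h2 : g.oddlevel v ≠ ⊤ := by
    intro h'; rw [h', add_top] at h; exact ENat.coe_ne_top s h.symm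
  lift g.evenlevel v to ℕ using h1 with e he
  lift g.oddlevel v to ℕ using h2 with o ho
  refine ⟨e, o, rfl, rfl, ?_⟩
  exact_mod_cast h

lemma lm_le_oddlevel (g : MatchedGraph V) {f : V} (hf : g.unmatched f) :
    g.lm ≤ g.oddlevel f := by
  unfold oddlevel
  apply le_sInf
  rintro n ⟨p, f', hpf, hoddlen, rfl⟩
  have hlen : 2 ≤ p.length := by
    obtain ⟨m, hm⟩ := hoddlen
    omega
  have hne : f' ≠ f :=
    head_ne_last_aux hpf.2.2.2.1 hlen hpf.2.1 hpf.2.2.1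
  exact sInf_le ⟨p, f', f, hpf, hf, hne, rfl⟩

lemma lt_tenacity_of_unmatched (g : MatchedGraph V) {f : V} (hf : g.unmatched f) {c : ℕ∞}
    (hc : c < g.lm) : c < g.tenacity f := by
  have h1 : g.oddlevel f ≤ g.tenacity f := by
    unfold tenacity; exact le_add_self
  exact hc.trans_le ((g.lm_le_oddlevel hf).trans h1)

/-- Matched partners have comparable tenacity (one direction). -/
lemma tenacity_le_of_matched (g : MatchedGraph V) {b x : V} (hm : g.M b x) {s : ℕ}
    (hx : g.tenacity x = (s : ℕ∞)) : g.tenacity b ≤ (s : ℕ∞) := by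
  obtain ⟨e, o, hev, hod, heo⟩ := g.tenacity_decomp hx
  have hmx : g.M x b := g.M_symm _ _ hm
  obtain ⟨P, fP, hPf, hPlen, hPeven⟩ := g.evenlevel_attained hev
  obtain ⟨hfP, hPpath⟩ := hPf
  have hP0 : 0 < P.length := length_pos_of_head?_aux hPpath.1
  have hxP : P.getD (P.length - 1) fP = x := last_getD_aux hPpath.2.1 fP hP0
  have he2 : 2 ≤ e := by
    rcases Nat.eq_zero_or_pos e with h0 | h1
    · exfalso
      have hl1 : P.length = 1 := by omega
      have hh : P.getD 0 fP = fP := head_getD_aux hPpath.1 fP hP0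
      have hx' : x = fP := by
        rw [← hxP, hl1]
        simpa using hh
      exact hfP b (hx' ▸ hmx)
    · obtain ⟨m, hm'⟩ := hPeven; omega
  have hPlen2 : P.length = e + 1 := by omega
  -- the last edge of P is matched, hence goes from b to x
  have hedge := hPpath.2.2.2 (e - 1) (by omega)
  have hsub : e - 1 + 1 = e := by omega
  rw [hsub] at hedge
  have hgete : P.getD e fP = x := by
    rw [← hxP, hPlen2]; simp
  have hmod : (e - 1) % 2 = 1 := by
    have := Nat.even_iff.mp hPeven
    omega
  have hmatched : g.M (P.getD (e - 1) fP) x := by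
    rw [← hgete]; exact hedge.2.mpr hmod
  have hbP : P.getD (e - 1) fP = b := by
    have := g.M_matching x b (P.getD (e - 1) fP) hmx (g.M_symm _ _ hmatched)
    exact this.symm
  -- hence oddlevel b ≤ e - 1
  have hOb : g.oddlevel b ≤ ((e - 1 : ℕ) : ℕ∞) := by
    have := (g.level_le_of_pos ⟨hfP, hPpath⟩ (show e - 1 < P.length by omega)).2
      (by rw [Nat.odd_iff]; exact hmod)
    rw [hbP] at this
    exact this
  -- now use an oddlevel path of x
  obtain ⟨W, fW, hWf, hWlen, hWodd⟩ := g.oddlevel_attained hod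
  obtain ⟨hfW, hWpath⟩ := hWf
  have hW0 : 0 < W.length := length_pos_of_head?_aux hWpath.1
  have hWlen2 : W.length = o + 1 := by
    have : 1 ≤ o := by obtain ⟨m, hm'⟩ := hWodd; omega
    omega
  have hxW : W.getD (W.length - 1) fW = x := last_getD_aux hWpath.2.1 fW hW0
  have hbx : b ≠ x := by
    intro h'
    rw [h'] at hm
    exact g.loopless x (g.M_sub _ _ hm)
  by_cases hbW : b ∈ W
  · obtain ⟨m, hmW, hWm⟩ := List.getElem_of_mem hbW
    have hbm : W.getD m fW = b := by rw [List.getD_eq_getElem _ _ hmW, hWm]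
    have hmne : m ≠ W.length - 1 := by
      intro h'
      apply hbx
      rw [← hbm, h', hxW]
    rcases Nat.even_or_odd m with hmeven | hmodd
    · have hEb := (g.level_le_of_pos ⟨hfW, hWpath⟩ hmW).1 hmeven
      rw [hbm] at hEb
      have hcalc : g.tenacity b ≤ (m : ℕ∞) + ((e - 1 : ℕ) : ℕ∞) := by
        unfold tenacity
        exact add_le_add hEb hOb
      refine hcalc.trans ?_
      have : m + (e - 1) ≤ s := by omega
      exact_mod_cast this
    · have hm1 : m + 1 < W.length := by omega
      have hedgeW := hWpath.2.2.2 m hm1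
      have hMb : g.M b (W.getD (m + 1) fW) := by
        rw [← hbm]; exact hedgeW.2.mpr (Nat.odd_iff.mp hmodd)
      have hxeq : W.getD (m + 1) fW = x := g.M_matching b (W.getD (m + 1) fW) x hMb hm
      exfalso
      have hWl1 : W.length - 1 < W.length := by omega
      have hidx : m + 1 = W.length - 1 := by
        have h1 : W[m + 1] = W[W.length - 1] := by
          rw [← List.getD_eq_getElem W fW hm1, ← List.getD_eq_getElem W fW hWl1, hxeq, hxW]
        exact (hWpath.2.2.1.getElem_inj_iff).mp h1
      have := Nat.odd_iff.mp hWodd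
      have := Nat.odd_iff.mp hmodd
      omega
  · -- b ∉ W : extend W by the matched edge (x, b)
    have hconcat : g.AltPath (W ++ [b]) fW b := by
      apply g.altPath_concat hWpath hbW (g.M_sub _ _ hmx)
      constructor
      · intro _; rw [hWlen2]; simp; exact Nat.odd_iff.mp hWodd
      · intro _; exact hmx
    have hlen3 : (W ++ [b]).length - 1 = o + 1 := by
      rw [List.length_append, List.length_singleton]
      omega
    have hEb : g.evenlevel b ≤ ((o + 1 : ℕ) : ℕ∞) := by
      apply sInf_le
      refine ⟨W ++ [b], fW, ⟨hfW, hconcat⟩, ?_, ?_⟩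
      · rw [hlen3]
        exact Nat.even_iff.mpr (by have := Nat.odd_iff.mp hWodd; omega)
      · rw [hlen3]
    have hcalc : g.tenacity b ≤ ((o + 1 : ℕ) : ℕ∞) + ((e - 1 : ℕ) : ℕ∞) := by
      unfold tenacity
      exact add_le_add hEb hOb
    refine hcalc.trans ?_
    have : (o + 1) + (e - 1) ≤ s := by omega
    exact_mod_cast this

lemma tenacity_le_of_matched' (g : MatchedGraph V) {b x : V} (hm : g.M b x) {s : ℕ}
    (hx : g.tenacity x ≤ (s : ℕ∞)) : g.tenacity b ≤ (s : ℕ∞) := by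
  have hxt : g.tenacity x ≠ ⊤ := ne_top_of_le_ne_top (ENat.coe_ne_top s) hx
  obtain ⟨sx, hsx⟩ : ∃ sx : ℕ, g.tenacity x = (sx : ℕ∞) := by
    lift g.tenacity x to ℕ using hxt with sx h
    exact ⟨sx, rfl⟩
  exact (g.tenacity_le_of_matched hm hsx).trans (hsx ▸ hx)

/-- On any level path of `v`, the base of `v` occurs at an even position,
and is a last vertex of high tenacity. -/
lemma base_even_pos (g : MatchedGraph V) {v b : V} {s : ℕ} (hv : g.tenacity v = (s : ℕ∞))
    (hbase : g.baseOf v b) (hslm : (s : ℕ∞) < g.lm) {p : List V} {f : V}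
    (hpath : g.IsEvenlevelPath p f v ∨ g.IsOddlevelPath p f v) :
    ∃ i, i + 1 < p.length ∧ Even i ∧ p.getD i f = b ∧
      g.evenlevel b ≤ (i : ℕ∞) ∧ (s : ℕ∞) < g.tenacity b := by
  have hfrom : g.AltPathFrom p f v := by
    rcases hpath with h | h
    · exact h.1
    · exact h.1
  obtain ⟨hf, hp⟩ := hfrom
  have hl0 : 0 < p.length := length_pos_of_head?_aux hp.1
  set K : Finset ℕ := (Finset.range p.length).filter
    (fun k => (s : ℕ∞) < g.tenacity (p.getD k f)) with hK
  have h0K : 0 ∈ K := by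
    rw [hK, Finset.mem_filter, Finset.mem_range]
    refine ⟨hl0, ?_⟩
    rw [head_getD_aux hp.1 f hl0]
    exact g.lt_tenacity_of_unmatched hf hslm
  have hKne : K.Nonempty := ⟨0, h0K⟩
  set i := K.max' hKne with hi
  have hiK : i ∈ K := K.max'_mem hKne
  rw [hK, Finset.mem_filter, Finset.mem_range] at hiK
  obtain ⟨hilen, hiten⟩ := hiK
  have hmax : ∀ k, i < k → k < p.length → g.tenacity (p.getD k f) ≤ (s : ℕ∞) := by
    intro k h1 h2
    by_contra hc
    push_neg at hc
    have hkK : k ∈ K := by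
      rw [hK, Finset.mem_filter, Finset.mem_range]; exact ⟨h2, hc⟩
    have := K.le_max' k hkK
    rw [← hi] at this
    omega
  have hmem : p.getD i f ∈ g.Bset v := by
    refine ⟨p, f, i, hpath, hilen, rfl, ?_, ?_⟩
    · rw [hv]; exact hiten
    · intro k hk1 hk2
      rw [hv]; exact hmax k hk1 hk2
  rw [hbase] at hmem
  have hib : p.getD i f = b := hmem
  have htb : (s : ℕ∞) < g.tenacity b := hib ▸ hiten
  have hlastv : p.getD (p.length - 1) f = v := last_getD_aux hp.2.1 f hl0
  have hine : i ≠ p.length - 1 := by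
    intro h'
    have hbv : b = v := by rw [← hib, h', hlastv]
    rw [hbv, hv] at htb
    exact lt_irrefl _ htb
  have hi1 : i + 1 < p.length := by omega
  have hieven : Even i := by
    by_contra hiodd
    rw [Nat.not_even_iff_odd] at hiodd
    have hedge := hp.2.2.2 i hi1
    have hMbx : g.M b (p.getD (i + 1) f) := by
      rw [← hib]
      exact hedge.2.mpr (Nat.odd_iff.mp hiodd)
    have hxten : g.tenacity (p.getD (i + 1) f) ≤ (s : ℕ∞) :=
      hmax (i + 1) (by omega) hi1
    have := g.tenacity_le_of_matched' hMbx hxten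
    exact absurd htb (not_lt.mpr this)
  have hEb : g.evenlevel b ≤ (i : ℕ∞) := by
    have := (g.level_le_of_pos ⟨hf, hp⟩ hilen).1 hieven
    rw [hib] at this
    exact this
  exact ⟨i, hi1, hieven, hib, hEb, htb⟩

/-- The base of a vertex of finite tenacity `< l_m` is outer. -/
lemma isOuter_base (g : MatchedGraph V) {v b : V} {s : ℕ} (hv : g.tenacity v = (s : ℕ∞))
    (hbase : g.baseOf v b) (hslm : (s : ℕ∞) < g.lm) : g.IsOuter b := by
  obtain ⟨e, o, hev, hod, heo⟩ := g.tenacity_decomp hv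
  obtain ⟨p, f, hpf, hplen, hpe⟩ := g.evenlevel_attained hev
  obtain ⟨q, fq, hqf, hqlen, hqo⟩ := g.oddlevel_attained hod
  have hpath : g.IsEvenlevelPath p f v :=
    ⟨hpf, by rw [hplen]; exact hpe, by rw [hplen]; exact hev.symm⟩
  have hqath : g.IsOddlevelPath q fq v :=
    ⟨hqf, by rw [hqlen]; exact hqo, by rw [hqlen]; exact hod.symm⟩
  obtain ⟨i, hip, hie, hib, hEi, htb⟩ := g.base_even_pos hv hbase hslm (Or.inl hpath)
  obtain ⟨j, hjq, hje, hjb, hEj, -⟩ := g.base_even_pos hv hbase hslm (Or.inr hqath)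
  have hple : p.length = e + 1 := by
    have := length_pos_of_head?_aux hpf.2.1; omega
  have hqle : q.length = o + 1 := by
    have := length_pos_of_head?_aux hqf.2.1; omega
  by_contra houter
  unfold IsOuter at houter
  have hinner : g.oddlevel b ≤ g.evenlevel b := not_lt.mp houter
  have h1 : g.tenacity b ≤ (j : ℕ∞) + (i : ℕ∞) := by
    unfold tenacity
    exact add_le_add hEj (hinner.trans hEi)
  have h2 : (j : ℕ∞) + (i : ℕ∞) < (s : ℕ∞) := by
    rw [hple] at hip
    rw [hqle] at hjq
    have : j + i < s := by omega
    exact_mod_cast this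
  exact lt_asymm htb (h1.trans_lt h2)

end MatchedGraph


/-- Two blossoms with the same base `b` and tenacities
`t ≤ t' < tenacity(b)` with `t' < l_m` satisfy `B_{b,t} ⊆ B_{b,t'}`. -/
theorem blossom_subset_of_le (g : MatchedGraph V) (b : V) (t t' : ℕ)
    (hodd : Odd t) (hodd' : Odd t') (htt' : t ≤ t')
    (ht'b : (t' : ℕ∞) < g.tenacity b) (ht'lm : (t' : ℕ∞) < g.lm)
    (hclaim : ∀ w, g.tenacity w ≤ (t' : ℕ∞) → ∃ b', g.baseOf w b') :
    g.blossom t b ⊆ g.blossom t' b := by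
  by_cases hb : g.IsOuter b
  · -- outer base: step up two at a time
    have step : ∀ s : ℕ, g.blossom s b ⊆ g.blossom (s + 2) b := by
      intro s x hx
      have hmem : x ∈ ⋃ w ∈ {w | (w ∈ g.Sset (s + 2) b ∨ w = b) ∧ g.IsOuter w},
          g.blossom s w :=
        Set.mem_biUnion (⟨Or.inr rfl, hb⟩ :
          b ∈ {w | (w ∈ g.Sset (s + 2) b ∨ w = b) ∧ g.IsOuter w}) hx
      exact Set.mem_union_right _ hmem
    have main : ∀ k, g.blossom t b ⊆ g.blossom (t + 2 * k) b := by
      intro k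
      induction k with
      | zero => simp
      | succ n ih =>
        have h2 : t + 2 * (n + 1) = (t + 2 * n) + 2 := by ring
        rw [h2]
        exact ih.trans (step (t + 2 * n))
    obtain ⟨k, hk⟩ : ∃ k, t' = t + 2 * k := by
      obtain ⟨a, ha⟩ := hodd
      obtain ⟨c, hc⟩ := hodd'
      exact ⟨c - a, by omega⟩
    rw [hk]
    exact main k
  · -- non-outer base: the smaller blossom is empty
    have hempty : g.blossom t b = ∅ := by
      match t with
      | 0 => rfl
      | 1 => rfl
      | (u + 2) =>
        have hS : g.Sset (u + 2) b = ∅ := by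
          rw [Set.eq_empty_iff_forall_notMem]
          intro w hw
          obtain ⟨hwt, hwb⟩ := hw
          have hle : ((u + 2 : ℕ) : ℕ∞) < g.lm :=
            lt_of_le_of_lt (by exact_mod_cast htt') ht'lm
          exact hb (g.isOuter_base hwt hwb hle)
        have hidx : {w | (w ∈ g.Sset (u + 2) b ∨ w = b) ∧ g.IsOuter w} = (∅ : Set V) := by
          rw [Set.eq_empty_iff_forall_notMem]
          rintro w ⟨hw1 | hw2, hw3⟩
          · rw [hS] at hw1
            exact hw1
          · exact hb (hw2 ▸ hw3)
        calc g.blossom (u + 2) b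
            = g.Sset (u + 2) b ∪
              ⋃ w ∈ {w | (w ∈ g.Sset (u + 2) b ∨ w = b) ∧ g.IsOuter w}, g.blossom u w := rfl
          _ = ∅ := by rw [hidx, hS]; simp
    rw [hempty]
    exact Set.empty_subset _
end

section
/- Let B_{b,t} and B_{b',t'} be two blossoms such that b belongs to B_{b',t'}. Then B_{b,t} is a proper subset of B_{b',t'}. -/
open scoped Classical

universe u

variable {V : Type u}

namespace MatchedGraph

lemma blossom_subset_add_two (g : MatchedGraph V) {b : V} (hb : g.IsOuter b) (t : ℕ) :
    g.blossom t b ⊆ g.blossom (t + 2) b := by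
  intro x hx
  simp only [blossom, Set.mem_union, Set.mem_iUnion, Set.mem_setOf_eq]
  exact Or.inr ⟨b, ⟨⟨Or.inr rfl, hb⟩, hx⟩⟩

lemma blossom_subset_add_two_mul (g : MatchedGraph V) {b : V} (hb : g.IsOuter b)
    (t k : ℕ) : g.blossom t b ⊆ g.blossom (t + 2 * k) b := by
  induction k with
  | zero => simp
  | succ k ih =>
      have : t + 2 * (k + 1) = (t + 2 * k) + 2 := by ring
      rw [this]
      exact ih.trans (g.blossom_subset_add_two hb (t + 2 * k))

lemma blossom_mono (g : MatchedGraph V) {b : V} (hb : g.IsOuter b) {t s : ℕ}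
    (hts : t ≤ s) (hpar : t % 2 = s % 2) : g.blossom t b ⊆ g.blossom s b := by
  obtain ⟨k, hk⟩ : ∃ k, s = t + 2 * k := ⟨(s - t) / 2, by omega⟩
  rw [hk]
  exact g.blossom_subset_add_two_mul hb t k

lemma tenacity_le_of_mem_blossom (g : MatchedGraph V) :
    ∀ t b w, w ∈ g.blossom t b → g.tenacity w ≤ (t : ℕ∞) := by
  intro t
  induction t using Nat.strong_induction_on with
  | _ t ih =>
    match t with
    | 0 => intro b w hw; simp [blossom] at hw
    | 1 => intro b w hw; simp [blossom] at hw
    | t + 2 =>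
      intro b w hw
      simp only [blossom, Set.mem_union, Set.mem_iUnion, Set.mem_setOf_eq] at hw
      rcases hw with hw | ⟨v, _, hwv⟩
      · exact le_of_eq hw.1
      · exact (ih t (by omega) v w hwv).trans (by exact_mod_cast Nat.le_add_right t 2)

lemma blossom_subset_of_mem (g : MatchedGraph V) :
    ∀ (t' : ℕ) (b' : V) (t : ℕ) (b : V), Odd t → Odd t' → g.IsOuter b → ((t : ℕ∞) < g.tenacity b) →
      b ∈ g.blossom t' b' → g.blossom t b ⊆ g.blossom t' b' := by
  intro t'
  induction t' using Nat.strong_induction_on with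
  | _ t' ih =>
    match t' with
    | 0 => intro b' t b _ _ _ _ hb; simp [blossom] at hb
    | 1 => intro b' t b _ _ _ _ hb; simp [blossom] at hb
    | s + 2 =>
      intro b' t b ht hts houter htb hb
      simp only [blossom, Set.mem_union, Set.mem_iUnion, Set.mem_setOf_eq] at hb
      have hstep : ∀ v, (v ∈ g.Sset (s + 2) b' ∨ v = b') → g.IsOuter v →
          g.blossom s v ⊆ g.blossom (s + 2) b' := by
        intro v hv hvo x hx
        simp only [blossom, Set.mem_union, Set.mem_iUnion, Set.mem_setOf_eq]
        exact Or.inr ⟨v, ⟨⟨hv, hvo⟩, hx⟩⟩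
      rcases hb with hb | ⟨v, ⟨hv, hvo⟩, hbv⟩
      · -- b ∈ Sset (s+2) b'
        have hten : g.tenacity b = ((s + 2 : ℕ) : ℕ∞) := hb.1
        have htlt : t < s + 2 := by
          have := htb; rw [hten] at this; exact_mod_cast this
        have hodds : Odd s := by
          rcases hts with ⟨m, hm⟩; exact ⟨m - 1, by omega⟩
        have hts' : t ≤ s := by
          rcases ht with ⟨a, ha⟩; rcases hodds with ⟨c, hc⟩; omega
        have h1 : g.blossom t b ⊆ g.blossom s b := by
          apply g.blossom_mono houter hts'
          rcases ht with ⟨a, ha⟩; rcases hodds with ⟨c, hc⟩; omega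
        exact h1.trans (hstep b (Or.inl hb) houter)
      · have hodds : Odd s := by
          rcases hts with ⟨m, hm⟩; exact ⟨m - 1, by omega⟩
        have h1 := ih s (by omega) v t b ht hodds houter htb hbv
        exact h1.trans (hstep v hv hvo)

end MatchedGraph


/-- If `b ∈ B_{b',t'}`, then `B_{b,t}` is a proper subset of
`B_{b',t'}`. -/
theorem blossom_ssubset_of_base_mem (g : MatchedGraph V) (b b' : V) (t t' : ℕ)
    (hodd : Odd t) (hodd' : Odd t')
    (houter : g.IsOuter b) (htb : (t : ℕ∞) < g.tenacity b)
    (houter' : g.IsOuter b') (htb' : (t' : ℕ∞) < g.tenacity b')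
    (htlm : (t : ℕ∞) < g.lm) (ht'lm : (t' : ℕ∞) < g.lm)
    (hclaim : ∀ w, g.tenacity w ≤ ((max t t' : ℕ) : ℕ∞) → ∃ c, g.baseOf w c)
    (hb : b ∈ g.blossom t' b') :
    g.blossom t b ⊂ g.blossom t' b' := by
  constructor
  · exact g.blossom_subset_of_mem t' b' t b hodd hodd' houter htb hb
  · intro hsub
    have := g.tenacity_le_of_mem_blossom t b b (hsub hb)
    exact absurd htb (not_lt.mpr this)
end
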